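/- Let θ₀ ∈ [0,2π), τ₀ ≠ 0 and n ≥ 1 be the parameters of a discrete helical lattice H₀ with reciprocal lattice H₀'. Then (α, β) ∈ ℤ × ℝ belongs to H₀' if and only if α·(2π/n) ∈ 2πℤ and αθ₀ + βτ₀ ∈ 2πℤ; explicitly, H₀' = { (i n, (−i n θ₀ + 2π j)/τ₀) : i, j ∈ ℤ }. -/

import Mathlib

noncomputable section

open Real

/-- Reduction of a real number modulo 2π into [0, 2π). -/
def mod2pi (x : ℝ) : ℝ := x - 2*Real.pi * ⌊x / (2*Real.pi)⌋

/-- The discrete helical lattice with parameters θ₀, τ₀, n: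
`H₀ = {((2πi/n + θ₀ j) mod 2π, τ₀ j) : i ∈ {0,…,n−1}, j ∈ ℤ} ⊂ [0,2π) × ℝ`. -/
def helLat (θ₀ τ₀ : ℝ) (n : ℕ) : Set (ℝ × ℝ) :=
  {p | ∃ i j : ℤ, 0 ≤ i ∧ i < (n : ℤ) ∧
    p = (mod2pi (2*Real.pi*i/n + θ₀*j), τ₀*j)}

/-- The reciprocal helical lattice:
`H₀' = {(α,β) ∈ ℤ × ℝ : αθ + βτ ∈ 2πℤ for all (θ,τ) ∈ H₀}`. -/
def helRec (θ₀ τ₀ : ℝ) (n : ℕ) : Set (ℤ × ℝ) :=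
  {q | ∀ p ∈ helLat θ₀ τ₀ n, ∃ m : ℤ, (q.1 : ℝ) * p.1 + q.2 * p.2 = 2*Real.pi*m}

lemma two_pi_pos' : (0:ℝ) < 2*Real.pi := by positivity

lemma mod2pi_eq_self' {x : ℝ} (hx : x ∈ Set.Ico 0 (2*Real.pi)) : mod2pi x = x := by
  unfold mod2pi
  have h : ⌊x / (2*Real.pi)⌋ = 0 := by
    rw [Int.floor_eq_zero_iff]
    constructor
    · exact div_nonneg hx.1 two_pi_pos'.le
    · exact (div_lt_one two_pi_pos').mpr hx.2
  rw [h]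
  simp

/-- Explicit description of the reciprocal helical lattice:
`(α,β) ∈ H₀'` iff `α·(2π/n) ∈ 2πℤ` and `αθ₀ + βτ₀ ∈ 2πℤ`, i.e.
`H₀' = {(in, (−inθ₀ + 2πj)/τ₀) : i, j ∈ ℤ}`. -/
theorem helRec_explicit (θ₀ τ₀ : ℝ) (hθ₀ : θ₀ ∈ Set.Ico 0 (2*Real.pi)) (hτ₀ : τ₀ ≠ 0)
    (n : ℕ) (hn : 1 ≤ n) :
    (∀ (α : ℤ) (β : ℝ), (α, β) ∈ helRec θ₀ τ₀ n ↔
      ((∃ m : ℤ, (α : ℝ) * (2*Real.pi/n) = 2*Real.pi*m) ∧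
       (∃ m : ℤ, (α : ℝ) * θ₀ + β * τ₀ = 2*Real.pi*m))) ∧
    helRec θ₀ τ₀ n =
      {q : ℤ × ℝ | ∃ i j : ℤ,
        q = (i * n, (-(i : ℝ) * n * θ₀ + 2*Real.pi*j) / τ₀)} := by
  have hn0 : (n : ℝ) ≠ 0 := Nat.cast_ne_zero.mpr (by omega)
  have key : ∀ (α : ℤ) (β : ℝ), (α, β) ∈ helRec θ₀ τ₀ n ↔
      ((∃ m : ℤ, (α : ℝ) * (2*Real.pi/n) = 2*Real.pi*m) ∧
       (∃ m : ℤ, (α : ℝ) * θ₀ + β * τ₀ = 2*Real.pi*m)) := by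
    intro α β
    constructor
    · intro h
      constructor
      · rcases Nat.lt_or_ge n 2 with h2 | h2
        · have : n = 1 := by omega
          subst this
          exact ⟨α, by push_cast; ring⟩
        · have hmem : (mod2pi (2*Real.pi*(1:ℤ)/n + θ₀*(0:ℤ)), τ₀*(0:ℤ)) ∈ helLat θ₀ τ₀ n :=
            ⟨1, 0, by norm_num, by exact_mod_cast h2, rfl⟩
          obtain ⟨m, hm⟩ := h _ hmem
          refine ⟨m, ?_⟩
          have hx : mod2pi (2*Real.pi*(1:ℤ)/n + θ₀*(0:ℤ)) = 2*Real.pi/n := by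
            have : 2*Real.pi*((1:ℤ):ℝ)/n + θ₀*((0:ℤ):ℝ) = 2*Real.pi/n := by push_cast; ring
            rw [this]
            refine mod2pi_eq_self' ⟨by positivity, ?_⟩
            exact div_lt_self two_pi_pos' (by exact_mod_cast h2)
          simp only [hx] at hm
          simpa using hm
      · have hmem : (mod2pi (2*Real.pi*(0:ℤ)/n + θ₀*(1:ℤ)), τ₀*(1:ℤ)) ∈ helLat θ₀ τ₀ n :=
          ⟨0, 1, le_refl _, by exact_mod_cast hn, rfl⟩
        obtain ⟨m, hm⟩ := h _ hmem
        refine ⟨m, ?_⟩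
        have hx : mod2pi (2*Real.pi*((0:ℤ):ℝ)/n + θ₀*((1:ℤ):ℝ)) = θ₀ := by
          have : 2*Real.pi*((0:ℤ):ℝ)/n + θ₀*((1:ℤ):ℝ) = θ₀ := by push_cast; ring
          rw [this]
          exact mod2pi_eq_self' hθ₀
        simp only [hx] at hm
        push_cast at hm ⊢
        linarith [hm]
    · rintro ⟨⟨m₁, h₁⟩, ⟨m₂, h₂⟩⟩ p ⟨i, j, hi0, hin, rfl⟩
      refine ⟨i*m₁ + j*m₂ - α*⌊(2*Real.pi*i/n + θ₀*j) / (2*Real.pi)⌋, ?_⟩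
      simp only [mod2pi]
      push_cast
      linear_combination (i:ℝ) * h₁ + (j:ℝ) * h₂
  refine ⟨key, ?_⟩
  ext ⟨α, β⟩
  rw [key α β]
  simp only [Set.mem_setOf_eq, Prod.mk.injEq]
  constructor
  · rintro ⟨⟨m₁, h₁⟩, ⟨m₂, h₂⟩⟩
    have hα : (α : ℝ) = m₁ * n := by
      have h2π : (2*Real.pi) ≠ 0 := two_pi_pos'.ne'
      apply mul_right_cancel₀ h2π
      field_simp at h₁
      linear_combination (2*Real.pi) * h₁
    refine ⟨m₁, m₂, by exact_mod_cast hα, ?_⟩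
    rw [eq_div_iff hτ₀]
    linear_combination h₂ - θ₀ * hα
  · rintro ⟨i, j, hα, hβ⟩
    have hαR : (α : ℝ) = i * n := by exact_mod_cast hα
    constructor
    · refine ⟨i, ?_⟩
      rw [hαR]
      field_simp
    · refine ⟨j, ?_⟩
      rw [hαR, hβ]
      field_simp
      ring
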